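/- arXiv:1104.3727 — 3 statements merged into one kernel-verified Lean document; each statement's English description precedes it below -/
import Mathlib

section
/- Let C be a binary self-dual code of length n with n ≡ 6 (mod 8), let C₀ = {c ∈ C : wt(c) ≡ 0 (mod 4)}, let C₂ = C \ C₀, and let C₁ and C₃ be the two distinct cosets of C₀ whose union is the shadow S = C₀^⊥ \ C. Then the code C* = {(v,0,0) : v ∈ C₀} ∪ {(v,1,1) : v ∈ C₂} ∪ {(v,1,0) : v ∈ C₁} ∪ {(v,0,1) : v ∈ C₃} ⊆ 𝔽₂^{n+2} is a doubly even self-dual code of length n+2. -/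
open Finset

/-- Hamming weight of a binary vector: number of nonzero coordinates. -/
def wt {n : ℕ} (x : Fin n → ZMod 2) : ℕ := (Finset.univ.filter fun i => x i ≠ 0).card

/-- The dual code with respect to the standard inner product. -/
def dualCode {n : ℕ} (C : Submodule (ZMod 2) (Fin n → ZMod 2)) :
    Submodule (ZMod 2) (Fin n → ZMod 2) where
  carrier := {x | ∀ y ∈ C, ∑ i, x i * y i = 0}
  add_mem' := by
    intro a b ha hb y hy
    simp only [Set.mem_setOf_eq] at *
    simp [Pi.add_apply, add_mul, Finset.sum_add_distrib, ha y hy, hb y hy]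
  zero_mem' := by intro y hy; simp
  smul_mem' := by
    intro c a ha y hy
    simp only [Set.mem_setOf_eq] at *
    simp [Pi.smul_apply, smul_eq_mul, mul_assoc, ← Finset.mul_sum, ha y hy]

/-- A code is self-dual if it equals its dual code. -/
def isSelfDual {n : ℕ} (C : Submodule (ZMod 2) (Fin n → ZMod 2)) : Prop := dualCode C = C

/-- A code is doubly even if every codeword has weight divisible by 4. -/
def isDoublyEven {n : ℕ} (C : Submodule (ZMod 2) (Fin n → ZMod 2)) : Prop :=
  ∀ x ∈ C, 4 ∣ wt x

/-- Minimum weight of a code: the smallest weight of a nonzero codeword. -/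
noncomputable def minWt {n : ℕ} (C : Submodule (ZMod 2) (Fin n → ZMod 2)) : ℕ :=
  sInf {w | ∃ x ∈ C, x ≠ 0 ∧ wt x = w}

/-- The linear map on `Fin n → ZMod 2` given by permuting coordinates. -/
def permMap {n : ℕ} (σ : Equiv.Perm (Fin n)) :
    (Fin n → ZMod 2) →ₗ[ZMod 2] (Fin n → ZMod 2) :=
  LinearMap.funLeft (ZMod 2) (ZMod 2) σ

/-- Equivalence of codes: one is obtained from the other by permuting coordinates. -/
def codeEquiv {n : ℕ} (C C' : Submodule (ZMod 2) (Fin n → ZMod 2)) : Prop :=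
  ∃ σ : Equiv.Perm (Fin n), Submodule.map (permMap σ) C = C'

/-- The dual of a set of vectors with respect to the standard inner product. -/
def dualSet {n : ℕ} (s : Set (Fin n → ZMod 2)) : Set (Fin n → ZMod 2) :=
  {x | ∀ y ∈ s, ∑ i, x i * y i = 0}

def ip {n : ℕ} (x y : Fin n → ZMod 2) : ZMod 2 := ∑ i, x i * y i
lemma zmod2_cases (a : ZMod 2) : a = 0 ∨ a = 1 := by revert a; decide

lemma wt_snoc {n : ℕ} (x : Fin n → ZMod 2) (a : ZMod 2) :
    wt (Fin.snoc x a) = wt x + if a ≠ 0 then 1 else 0 := by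
  classical
  simp only [wt, Finset.card_filter]
  rw [Fin.sum_univ_castSucc]
  simp

lemma ip_snoc {n : ℕ} (x y : Fin n → ZMod 2) (a b : ZMod 2) :
    ip (Fin.snoc x a) (Fin.snoc y b) = ip x y + a * b := by
  unfold ip; rw [Fin.sum_univ_castSucc]; simp

lemma snoc_add {n : ℕ} (x y : Fin n → ZMod 2) (a b : ZMod 2) :
    ((Fin.snoc x a : Fin (n+1) → ZMod 2) + Fin.snoc y b) = Fin.snoc (x + y) (a + b) := by
  funext i
  induction i using Fin.lastCases <;> simp

lemma vec_add_self {n : ℕ} (x : Fin n → ZMod 2) : x + x = 0 := by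
  funext i
  rcases zmod2_cases (x i) with h|h <;> simp [h, show (1:ZMod 2)+1 = 0 by decide]

noncomputable def chi : ZMod 2 → ℂ := fun a => if a = 0 then 1 else -1

lemma chi_zero : chi 0 = 1 := by simp [chi]
lemma chi_one : chi 1 = -1 := by simp [chi]

lemma chi_add (a b : ZMod 2) : chi (a + b) = chi a * chi b := by
  rcases zmod2_cases a with h|h <;> rcases zmod2_cases b with h'|h' <;>
    simp [h, h', chi, show (1:ZMod 2)+1 = 0 by decide]

lemma chi_sum {ι : Type*} (s : Finset ι) (f : ι → ZMod 2) :
    chi (∑ i ∈ s, f i) = ∏ i ∈ s, chi (f i) := by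
  classical
  induction s using Finset.induction_on with
  | empty => simp [chi]
  | insert _ _ h ih => rw [Finset.sum_insert h, Finset.prod_insert h, chi_add, ih]

lemma zmod2_sum {M : Type*} [AddCommMonoid M] (f : ZMod 2 → M) : ∑ v, f v = f 0 + f 1 := by
  have h : (univ : Finset (ZMod 2)) = {0, 1} := by decide
  rw [h, Finset.sum_insert (by decide), Finset.sum_singleton]

lemma char_sum {n : ℕ} (S₀ : Finset (Fin n → ZMod 2))
    (hadd : ∀ c ∈ S₀, ∀ d ∈ S₀, c + d ∈ S₀) (x : Fin n → ZMod 2) :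
    ∑ c ∈ S₀, chi (ip x c) = if (∀ c ∈ S₀, ip x c = 0) then (S₀.card : ℂ) else 0 := by
  classical
  split_ifs with h
  · rw [Finset.sum_congr rfl (fun c hc => by rw [h c hc, chi_zero]), Finset.sum_const,
      nsmul_eq_mul, mul_one]
  · push_neg at h
    obtain ⟨c₀, hc₀, hic₀⟩ := h
    have hone : ip x c₀ = 1 := (zmod2_cases _).resolve_left hic₀
    have key : ∑ c ∈ S₀, chi (ip x c) = ∑ c ∈ S₀, chi (ip x (c + c₀)) := by
      refine Finset.sum_nbij' (fun c => c + c₀) (fun c => c + c₀) ?_ ?_ ?_ ?_ ?_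
      · intro a ha; exact hadd a ha c₀ hc₀
      · intro a ha; exact hadd a ha c₀ hc₀
      · intro a _; simp [add_assoc, vec_add_self]
      · intro a _; simp [add_assoc, vec_add_self]
      · intro a _; simp [add_assoc, vec_add_self]
    have key2 : ∀ c, chi (ip x (c + c₀)) = - chi (ip x c) := by
      intro c
      have : ip x (c + c₀) = ip x c + ip x c₀ := by
        unfold ip
        rw [← Finset.sum_add_distrib]
        exact Finset.sum_congr rfl fun i _ => by rw [Pi.add_apply, mul_add]
      rw [this, hone, chi_add, chi_one, mul_neg_one]
    rw [Finset.sum_congr rfl (fun c _ => key2 c), Finset.sum_neg_distrib] at key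
    linear_combination (1/2 : ℂ) * key

lemma negI_pow_four : (-Complex.I)^4 = 1 := by
  rw [show ((-Complex.I))^4 = (Complex.I^2)^2 by ring, Complex.I_sq]; norm_num

lemma inner_gauss {n : ℕ} (c : Fin n → ZMod 2) :
    ∑ x : Fin n → ZMod 2, Complex.I ^ wt x * chi (ip x c)
      = (1 + Complex.I)^n * (-Complex.I)^(wt c) := by
  classical
  have hI : ∀ x : Fin n → ZMod 2,
      (Complex.I : ℂ) ^ wt x = ∏ i, (if x i ≠ 0 then Complex.I else 1) := by
    intro x
    rw [wt, ← Finset.prod_const, Finset.prod_filter]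
  calc ∑ x : Fin n → ZMod 2, Complex.I ^ wt x * chi (ip x c)
      = ∑ x : Fin n → ZMod 2, ∏ i, ((if x i ≠ 0 then Complex.I else 1) * chi (x i * c i)) := by
        refine Finset.sum_congr rfl fun x _ => ?_
        rw [hI x, show chi (ip x c) = ∏ i, chi (x i * c i) from chi_sum _ _,
          Finset.prod_mul_distrib]
    _ = ∏ i, ∑ v : ZMod 2, ((if v ≠ 0 then Complex.I else 1) * chi (v * c i)) := by
        rw [Finset.prod_univ_sum, Fintype.piFinset_univ]
    _ = ∏ i, (if c i ≠ 0 then (1 - Complex.I) else (1 + Complex.I)) := by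
        refine Finset.prod_congr rfl fun i _ => ?_
        rw [zmod2_sum]
        rcases zmod2_cases (c i) with h|h <;> simp [h, chi] <;> ring
    _ = (1 - Complex.I)^(wt c) * (1 + Complex.I)^(n - wt c) := by
        rw [Finset.prod_ite, Finset.prod_const, Finset.prod_const]
        have hcard1 : (univ.filter fun i => c i ≠ 0).card = wt c := rfl
        have hcard2 : (univ.filter fun i => ¬ c i ≠ 0).card = n - wt c := by
          have h := Finset.card_filter_add_card_filter_not
            (s := (univ : Finset (Fin n))) (p := fun i => c i ≠ 0)
          rw [hcard1] at h
          simp only [Finset.card_univ, Fintype.card_fin] at h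
          omega
        rw [hcard1, hcard2]
    _ = (1 + Complex.I)^n * (-Complex.I)^(wt c) := by
        have hw : wt c ≤ n := by
          have := Finset.card_filter_le (univ : Finset (Fin n)) (fun i => c i ≠ 0)
          simpa [wt] using this
        have h1 : (1:ℂ) - Complex.I = (1 + Complex.I) * (-Complex.I) := by
          linear_combination Complex.I_sq
        rw [h1, mul_pow,
          show (1 + Complex.I)^(wt c) * (-Complex.I)^(wt c) * (1+Complex.I)^(n - wt c)
            = ((1+Complex.I)^(wt c) * (1+Complex.I)^(n - wt c)) * (-Complex.I)^(wt c) by ring,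
          ← pow_add, Nat.add_sub_cancel' hw]

lemma gauss_total {n : ℕ} (S₀ : Finset (Fin n → ZMod 2))
    (hzero : (0 : Fin n → ZMod 2) ∈ S₀)
    (hadd : ∀ c ∈ S₀, ∀ d ∈ S₀, c + d ∈ S₀)
    (hwt : ∀ c ∈ S₀, 4 ∣ wt c) :
    ∑ x ∈ univ.filter (fun x => ∀ c ∈ S₀, ip x c = 0), Complex.I ^ wt x
      = (1 + Complex.I)^n := by
  classical
  have h1 : ∑ c ∈ S₀, ∑ x : Fin n → ZMod 2, Complex.I ^ wt x * chi (ip x c)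
      = (S₀.card : ℂ) * (1 + Complex.I)^n := by
    rw [Finset.sum_congr rfl (fun c hc => ?_), Finset.sum_const, nsmul_eq_mul]
    rw [inner_gauss]
    obtain ⟨k, hk⟩ := hwt c hc
    rw [hk, pow_mul, negI_pow_four, one_pow, mul_one]
  have h2 : ∑ c ∈ S₀, ∑ x : Fin n → ZMod 2, Complex.I ^ wt x * chi (ip x c)
      = ∑ x : Fin n → ZMod 2, Complex.I ^ wt x * ∑ c ∈ S₀, chi (ip x c) := by
    rw [Finset.sum_comm]
    exact Finset.sum_congr rfl fun x _ => (Finset.mul_sum _ _ _).symm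
  have h3 : ∑ x : Fin n → ZMod 2, Complex.I ^ wt x * ∑ c ∈ S₀, chi (ip x c)
      = (∑ x ∈ univ.filter (fun x => ∀ c ∈ S₀, ip x c = 0), Complex.I ^ wt x) * S₀.card := by
    rw [Finset.sum_congr rfl (fun x _ => by rw [char_sum S₀ hadd x])]
    simp only [mul_ite, mul_zero]
    rw [← Finset.sum_filter]
    exact (Finset.sum_mul _ _ _).symm
  have hcardne : (S₀.card : ℂ) ≠ 0 := by
    simp only [ne_eq, Nat.cast_eq_zero, Finset.card_eq_zero]
    exact fun h => by simp [h] at hzero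
  have key : (S₀.card : ℂ) * (∑ x ∈ univ.filter (fun x => ∀ c ∈ S₀, ip x c = 0), Complex.I ^ wt x)
      = (S₀.card : ℂ) * (1 + Complex.I)^n := by
    rw [mul_comm]
    exact (h2.trans h3).symm.trans h1
  exact mul_left_cancel₀ hcardne key

lemma z4_zero_iff (w : ℕ) : (w : ZMod 4) = 0 ↔ 4 ∣ w := ZMod.natCast_eq_zero_iff w 4

lemma z2_of_z4 (w : ℕ) : ((w : ZMod 4) = 0 ∨ (w : ZMod 4) = 2) ∨ ((w : ZMod 4) = 1 ∨ (w : ZMod 4) = 3) := by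
  have h := ZMod.natCast_mod w 4
  have h4 : w % 4 = 0 ∨ w % 4 = 1 ∨ w % 4 = 2 ∨ w % 4 = 3 := by omega
  rcases h4 with h'|h'|h'|h' <;> rw [← h, h'] <;> norm_num

lemma z4_even (w : ℕ) (h : (w : ZMod 2) = 0) : (w : ZMod 4) = 0 ∨ (w : ZMod 4) = 2 := by
  have h2 : 2 ∣ w := (ZMod.natCast_eq_zero_iff w 2).mp h
  have hm := ZMod.natCast_mod w 4
  have h4 : w % 4 = 0 ∨ w % 4 = 2 := by omega
  rcases h4 with h'|h' <;> rw [← hm, h'] <;> norm_num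

lemma z4_odd (w : ℕ) (h : (w : ZMod 2) = 1) : (w : ZMod 4) = 1 ∨ (w : ZMod 4) = 3 := by
  have h2 : ¬ 2 ∣ w := by
    intro hd
    rw [(ZMod.natCast_eq_zero_iff w 2).mpr hd] at h
    exact absurd h (by decide)
  have hm := ZMod.natCast_mod w 4
  have h4 : w % 4 = 1 ∨ w % 4 = 3 := by omega
  rcases h4 with h'|h' <;> rw [← hm, h'] <;> norm_num

lemma I_pow_z4 {w : ℕ} {a : ZMod 4} (h : (w : ZMod 4) = a) :
    Complex.I ^ w = Complex.I ^ a.val := by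
  have hv : w % 4 = a.val := by rw [← h, ZMod.val_natCast]
  conv_lhs => rw [← Nat.div_add_mod w 4]
  rw [pow_add, pow_mul, show Complex.I ^ 4 = 1 by rw [show (4:ℕ) = 2*2 by rfl, pow_mul, Complex.I_sq]; norm_num,
    one_pow, one_mul, hv]

lemma snoc_zero {n : ℕ} : (Fin.snoc (0 : Fin n → ZMod 2) (0 : ZMod 2) : Fin (n+1) → ZMod 2) = 0 := by
  funext i
  induction i using Fin.lastCases <;> simp

lemma wt_zero {n : ℕ} : wt (0 : Fin n → ZMod 2) = 0 := by simp [wt]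

lemma vec_two_nsmul {n : ℕ} (x : Fin n → ZMod 2) : (2:ℕ) • x = 0 := by
  rw [two_smul]; exact vec_add_self x

lemma vec_two_mul {n : ℕ} (x : Fin n → ZMod 2) : (2 : Fin n → ZMod 2) * x = 0 := by
  funext i
  show (2 : ZMod 2) * x i = 0
  rw [show (2 : ZMod 2) = 0 by decide, zero_mul]

lemma wt_add_eq {n : ℕ} (x y : Fin n → ZMod 2) :
    wt (x + y) + 2 * (univ.filter fun i => x i ≠ 0 ∧ y i ≠ 0).card = wt x + wt y := by
  classical
  simp only [wt, Finset.card_filter, Finset.mul_sum, ← Finset.sum_add_distrib]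
  refine Finset.sum_congr rfl fun i _ => ?_
  rcases zmod2_cases (x i) with h|h <;> rcases zmod2_cases (y i) with h'|h' <;>
    simp [Pi.add_apply, h, h', show (1:ZMod 2) + 1 = 0 by decide]

lemma ip_comm {n : ℕ} (x y : Fin n → ZMod 2) : ip x y = ip y x := by
  unfold ip; exact Finset.sum_congr rfl fun i _ => mul_comm _ _

lemma ip_eq_card {n : ℕ} (x y : Fin n → ZMod 2) :
    ip x y = ((univ.filter fun i => x i ≠ 0 ∧ y i ≠ 0).card : ZMod 2) := by
  classical
  rw [ip, ← Finset.sum_boole]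
  refine Finset.sum_congr rfl fun i _ => ?_
  rcases zmod2_cases (x i) with h|h <;> rcases zmod2_cases (y i) with h'|h' <;> simp [h, h']

lemma ip_self {n : ℕ} (x : Fin n → ZMod 2) : ip x x = (wt x : ZMod 2) := by
  classical
  rw [wt, ip, ← Finset.sum_boole]
  refine Finset.sum_congr rfl fun i _ => ?_
  rcases zmod2_cases (x i) with h|h <;> simp [h]

lemma ip_add_right {n : ℕ} (x y z : Fin n → ZMod 2) : ip x (y + z) = ip x y + ip x z := by
  unfold ip
  rw [← Finset.sum_add_distrib]
  exact Finset.sum_congr rfl fun i _ => by rw [Pi.add_apply, mul_add]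

lemma ip_add_left {n : ℕ} (x y z : Fin n → ZMod 2) : ip (x + y) z = ip x z + ip y z := by
  rw [ip_comm, ip_add_right, ip_comm z x, ip_comm z y]

lemma natCast_zmod2_zero_iff (k : ℕ) : (k : ZMod 2) = 0 ↔ 2 ∣ k :=
  ZMod.natCast_eq_zero_iff k 2

lemma wt4_add_of_ip_zero {n : ℕ} {x y : Fin n → ZMod 2} (h : ip x y = 0) :
    (wt (x + y) : ZMod 4) = wt x + wt y := by
  classical
  have e := wt_add_eq x y
  have h2 : 2 ∣ (univ.filter fun i => x i ≠ 0 ∧ y i ≠ 0).card := by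
    rw [← natCast_zmod2_zero_iff]
    rw [ip_eq_card] at h; exact h
  obtain ⟨j, hj⟩ := h2
  rw [hj] at e
  have e4 : (wt (x+y) : ZMod 4) + 2 * (2 * j : ℕ) = wt x + wt y := by
    exact_mod_cast congrArg (Nat.cast : ℕ → ZMod 4) e
  push_cast at e4
  have h4 : (4 : ZMod 4) = 0 := by decide
  linear_combination e4 - (j : ZMod 4) * h4

lemma wt4_add_of_ip_one {n : ℕ} {x y : Fin n → ZMod 2} (h : ip x y = 1) :
    (wt (x + y) : ZMod 4) = wt x + wt y + 2 := by
  classical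
  have e := wt_add_eq x y
  have h2 : ¬ 2 ∣ (univ.filter fun i => x i ≠ 0 ∧ y i ≠ 0).card := by
    rw [← natCast_zmod2_zero_iff]
    rw [ip_eq_card] at h
    rw [h]; decide
  obtain ⟨j, hj⟩ : ∃ j, (univ.filter fun i => x i ≠ 0 ∧ y i ≠ 0).card = 2 * j + 1 :=
    ⟨(univ.filter fun i => x i ≠ 0 ∧ y i ≠ 0).card / 2, by omega⟩
  rw [hj] at e
  have e4 : (wt (x+y) : ZMod 4) + 2 * (2 * j + 1 : ℕ) = wt x + wt y := by
    exact_mod_cast congrArg (Nat.cast : ℕ → ZMod 4) e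
  push_cast at e4
  have h4 : (4 : ZMod 4) = 0 := by decide
  linear_combination e4 - ((j : ZMod 4) + 1) * h4
/-- Brualdi--Pless: for a self-dual code `C` of length `n ≡ 6 (mod 8)`, with
`C₀` the doubly even subcode, `C₂ = C \ C₀` and `C₁, C₃` the two distinct cosets
of `C₀` making up the shadow `C₀^⊥ \ C`, the set
`C* = (C₀,0,0) ∪ (C₂,1,1) ∪ (C₁,1,0) ∪ (C₃,0,1)` is a doubly even self-dual code
of length `n + 2`. -/
theorem brualdi_pless_construction {n : ℕ}
    (C : Submodule (ZMod 2) (Fin n → ZMod 2))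
    (hSD : isSelfDual C) (hn : n % 8 = 6)
    (C₀ : Set (Fin n → ZMod 2)) (hC₀ : C₀ = {c | c ∈ C ∧ 4 ∣ wt c})
    (C₁ C₃ : Set (Fin n → ZMod 2))
    (hC₁ : ∃ a, C₁ = (a + ·) '' C₀)
    (hC₃ : ∃ a, C₃ = (a + ·) '' C₀)
    (hne : C₁ ≠ C₃)
    (hshadow : C₁ ∪ C₃ = dualSet C₀ \ ↑C) :
    ∃ D : Submodule (ZMod 2) (Fin (n + 2) → ZMod 2),
      (↑D : Set (Fin (n + 2) → ZMod 2)) =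
          (fun v => Fin.snoc (Fin.snoc v (0 : ZMod 2)) (0 : ZMod 2)) '' C₀ ∪
          (fun v => Fin.snoc (Fin.snoc v (1 : ZMod 2)) (1 : ZMod 2)) '' ((↑C : Set _) \ C₀) ∪
          (fun v => Fin.snoc (Fin.snoc v (1 : ZMod 2)) (0 : ZMod 2)) '' C₁ ∪
          (fun v => Fin.snoc (Fin.snoc v (0 : ZMod 2)) (1 : ZMod 2)) '' C₃ ∧
      isSelfDual D ∧ isDoublyEven D := by
  classical
  -- ## Part 1: basic facts about C
  have hipC : ∀ c ∈ C, ∀ d ∈ C, ip c d = 0 := by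
    intro c hc d hd
    have hc' : c ∈ dualCode C := by rw [hSD]; exact hc
    exact hc' d hd
  have heven : ∀ c ∈ C, (wt c : ZMod 2) = 0 := by
    intro c hc
    rw [← ip_self]
    exact hipC c hc c hc
  have hmemC0 : ∀ c, c ∈ C₀ ↔ c ∈ C ∧ (wt c : ZMod 4) = 0 := by
    intro c
    rw [hC₀]
    simp only [Set.mem_setOf_eq, z4_zero_iff]
  have hC0C : ∀ c ∈ C₀, c ∈ C := fun c hc => ((hmemC0 c).mp hc).1
  have hQ0 : ∀ c ∈ C₀, (wt c : ZMod 4) = 0 := fun c hc => ((hmemC0 c).mp hc).2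
  have hQ2 : ∀ c ∈ C, c ∉ C₀ → (wt c : ZMod 4) = 2 := by
    intro c hc hnc
    rcases z4_even (wt c) (heven c hc) with h|h
    · exact absurd ((hmemC0 c).mpr ⟨hc, h⟩) hnc
    · exact h
  have hC0add : ∀ c ∈ C₀, ∀ d ∈ C₀, c + d ∈ C₀ := by
    intro c hc d hd
    refine (hmemC0 _).mpr ⟨C.add_mem (hC0C c hc) (hC0C d hd), ?_⟩
    rw [wt4_add_of_ip_zero (hipC c (hC0C c hc) d (hC0C d hd)), hQ0 c hc, hQ0 d hd, add_zero]
  have hsubC0 : ∀ u v : Fin n → ZMod 2, u ∈ C₀ → u + v ∈ C₀ → v ∈ C₀ := by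
    intro u v hu huv
    have : v = u + (u + v) := by rw [← add_assoc, vec_add_self, zero_add]
    rw [this]
    exact hC0add u hu _ huv
  -- the all-ones vector
  set ones : Fin n → ZMod 2 := fun _ => 1 with hones_def
  have hip_ones : ∀ x : Fin n → ZMod 2, ip x ones = (wt x : ZMod 2) := by
    intro x
    rw [← ip_self]
    refine Finset.sum_congr rfl fun i _ => ?_
    rcases zmod2_cases (x i) with h|h <;> simp [hones_def, h]
  have honesC : ones ∈ C := by
    rw [← hSD]
    intro y hy
    have : ∑ i, ones i * y i = ip y ones := by
      rw [ip_comm]; rfl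
    rw [this, hip_ones, heven y hy]
  have hwt_ones : wt ones = n := by simp [wt, hones_def]
  obtain ⟨k, hk⟩ : ∃ k, n = 8 * k + 6 := ⟨n / 8, by omega⟩
  have hQones : (wt ones : ZMod 4) = 2 := by
    rw [hwt_ones, hk]
    push_cast
    have h8 : (8 : ZMod 4) = 0 := by decide
    have h6 : (6 : ZMod 4) = 2 := by decide
    rw [h8, h6, zero_mul, zero_add]
  have honesC0 : ones ∉ C₀ := by
    intro h
    rw [hQ0 ones h] at hQones
    exact absurd hQones.symm (by decide)
  -- ## Part 2: shadow facts
  have hShdual : ∀ x ∈ C₁ ∪ C₃, ∀ c ∈ C₀, ip x c = 0 := by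
    intro x hx c hc
    have hx' : x ∈ dualSet C₀ \ ↑C := hshadow ▸ hx
    exact hx'.1 c hc
  have hShnC : ∀ x ∈ C₁ ∪ C₃, x ∉ C := by
    intro x hx
    have hx' : x ∈ dualSet C₀ \ ↑C := hshadow ▸ hx
    exact hx'.2
  have hdual_cases : ∀ x : Fin n → ZMod 2, (∀ c ∈ C₀, ip x c = 0) → x ∈ C ∨ x ∈ C₁ ∪ C₃ := by
    intro x hx
    by_cases hxC : x ∈ C
    · exact Or.inl hxC
    · right
      rw [hshadow]
      exact ⟨fun c hc => hx c hc, hxC⟩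
  have hCdual : ∀ c ∈ C, ∀ e ∈ C₀, ip c e = 0 := fun c hc e he => hipC c hc e (hC0C e he)
  have hip2 : ∀ x : Fin n → ZMod 2, x ∉ C → (∀ c ∈ C₀, ip x c = 0) →
      ∀ c ∈ C, c ∉ C₀ → ip x c = 1 := by
    intro x hxC hx0 c hc hc0
    have hxd : x ∉ dualCode C := by rw [hSD]; exact hxC
    have : ¬ ∀ y ∈ C, ip x y = 0 := hxd
    push_neg at this
    obtain ⟨y, hy, hyne⟩ := this
    have hy1 : ip x y = 1 := (zmod2_cases _).resolve_left hyne
    have hy0 : y ∉ C₀ := fun h => hyne (hx0 y h)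
    have hcy : c + y ∈ C₀ := by
      refine (hmemC0 _).mpr ⟨C.add_mem hc hy, ?_⟩
      rw [wt4_add_of_ip_zero (hipC c hc y hy), hQ2 c hc hc0, hQ2 y hy hy0]
      decide
    have hc' : c = y + (c + y) := by
      rw [add_comm c y, ← add_assoc, vec_add_self, zero_add]
    rw [hc', ip_add_right, hy1, hx0 _ hcy, add_zero]
  have hodd : ∀ x : Fin n → ZMod 2, x ∉ C → (∀ c ∈ C₀, ip x c = 0) → (wt x : ZMod 2) = 1 := by
    intro x hxC hx0
    rw [← hip_ones]
    exact hip2 x hxC hx0 ones honesC honesC0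
  -- ## Part 3: coset structure
  obtain ⟨a₁, ha₁⟩ := hC₁
  obtain ⟨a₃, ha₃⟩ := hC₃
  have hmem₁ : ∀ x, x ∈ C₁ ↔ x + a₁ ∈ C₀ := by
    intro x
    rw [ha₁]
    constructor
    · rintro ⟨c, hc, rfl⟩
      have : a₁ + c + a₁ = c := by
        rw [add_comm a₁ c, add_assoc, vec_add_self, add_zero]
      rw [this]; exact hc
    · intro h
      exact ⟨x + a₁, h, by
        show a₁ + (x + a₁) = x
        rw [add_comm x a₁, ← add_assoc, vec_add_self, zero_add]⟩
  have hmem₃ : ∀ x, x ∈ C₃ ↔ x + a₃ ∈ C₀ := by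
    intro x
    rw [ha₃]
    constructor
    · rintro ⟨c, hc, rfl⟩
      have : a₃ + c + a₃ = c := by
        rw [add_comm a₃ c, add_assoc, vec_add_self, add_zero]
      rw [this]; exact hc
    · intro h
      exact ⟨x + a₃, h, by
        show a₃ + (x + a₃) = x
        rw [add_comm x a₃, ← add_assoc, vec_add_self, zero_add]⟩
  have h0C0 : (0 : Fin n → ZMod 2) ∈ C₀ := (hmemC0 _).mpr ⟨C.zero_mem, by rw [wt_zero]; rfl⟩
  have ha₁C₁ : a₁ ∈ C₁ := (hmem₁ a₁).mpr (by rw [vec_add_self]; exact h0C0)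
  have ha₃C₃ : a₃ ∈ C₃ := (hmem₃ a₃).mpr (by rw [vec_add_self]; exact h0C0)
  have hC13disj : ∀ x, x ∈ C₁ → x ∈ C₃ → False := by
    intro x hx1 hx3
    apply hne
    ext z
    rw [hmem₁, hmem₃]
    have h1 := (hmem₁ x).mp hx1
    have h3 := (hmem₃ x).mp hx3
    constructor
    · intro h
      have : z + a₃ = (z + a₁) + ((x + a₁) + (x + a₃)) := by abel_nf; simp [vec_two_nsmul, vec_two_mul]
      rw [this]
      exact hC0add _ h _ (hC0add _ h1 _ h3)
    · intro h
      have : z + a₁ = (z + a₃) + ((x + a₁) + (x + a₃)) := by abel_nf; simp [vec_two_nsmul, vec_two_mul]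
      rw [this]
      exact hC0add _ h _ (hC0add _ h1 _ h3)
  -- addition rules
  have hC1add0 : ∀ x ∈ C₁, ∀ c ∈ C₀, x + c ∈ C₁ := by
    intro x hx c hc
    rw [hmem₁]
    have : x + c + a₁ = (x + a₁) + c := by abel
    rw [this]
    exact hC0add _ ((hmem₁ x).mp hx) _ hc
  have hC3add0 : ∀ x ∈ C₃, ∀ c ∈ C₀, x + c ∈ C₃ := by
    intro x hx c hc
    rw [hmem₃]
    have : x + c + a₃ = (x + a₃) + c := by abel
    rw [this]
    exact hC0add _ ((hmem₃ x).mp hx) _ hc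
  have hC1C1 : ∀ x ∈ C₁, ∀ y ∈ C₁, x + y ∈ C₀ := by
    intro x hx y hy
    have : x + y = (x + a₁) + (y + a₁) := by abel_nf; simp [vec_two_nsmul, vec_two_mul]
    rw [this]
    exact hC0add _ ((hmem₁ x).mp hx) _ ((hmem₁ y).mp hy)
  have hC3C3 : ∀ x ∈ C₃, ∀ y ∈ C₃, x + y ∈ C₀ := by
    intro x hx y hy
    have : x + y = (x + a₃) + (y + a₃) := by abel_nf; simp [vec_two_nsmul, vec_two_mul]
    rw [this]
    exact hC0add _ ((hmem₃ x).mp hx) _ ((hmem₃ y).mp hy)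
  have hShdual' : ∀ x ∈ C₁ ∪ C₃, ∀ c ∈ C, c ∉ C₀ → ip x c = 1 :=
    fun x hx => hip2 x (hShnC x hx) (hShdual x hx)
  have hSh_add_dual : ∀ x ∈ C₁ ∪ C₃, ∀ c ∈ C, ∀ e ∈ C₀, ip (x + c) e = 0 := by
    intro x hx c hc e he
    rw [ip_add_left, hShdual x hx e he, hCdual c hc e he, add_zero]
  have hC1add2 : ∀ x ∈ C₁, ∀ c ∈ C, c ∉ C₀ → x + c ∈ C₃ := by
    intro x hx c hc hc0
    have hxc_nC : x + c ∉ C := by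
      intro h
      have : x = (x + c) + c := by rw [add_assoc, vec_add_self, add_zero]
      exact hShnC x (Or.inl hx) (this ▸ C.add_mem h hc)
    rcases hdual_cases (x + c) (hSh_add_dual x (Or.inl hx) c hc) with h|h
    · exact absurd h hxc_nC
    · rcases h with h|h
      · exfalso
        have h1 := (hmem₁ (x + c)).mp h
        have h2 := (hmem₁ x).mp hx
        have : c = (x + a₁) + (x + c + a₁) := by abel_nf; simp [vec_two_nsmul, vec_two_mul]
        exact hc0 (this ▸ hC0add _ h2 _ h1)
      · exact h
  have hC3add2 : ∀ x ∈ C₃, ∀ c ∈ C, c ∉ C₀ → x + c ∈ C₁ := by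
    intro x hx c hc hc0
    have hxc_nC : x + c ∉ C := by
      intro h
      have : x = (x + c) + c := by rw [add_assoc, vec_add_self, add_zero]
      exact hShnC x (Or.inr hx) (this ▸ C.add_mem h hc)
    rcases hdual_cases (x + c) (hSh_add_dual x (Or.inr hx) c hc) with h|h
    · exact absurd h hxc_nC
    · rcases h with h|h
      · exact h
      · exfalso
        have h1 := (hmem₃ (x + c)).mp h
        have h2 := (hmem₃ x).mp hx
        have : c = (x + a₃) + (x + c + a₃) := by abel_nf; simp [vec_two_nsmul, vec_two_mul]
        exact hc0 (this ▸ hC0add _ h2 _ h1)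
  have hC13add : ∀ x ∈ C₁, ∀ y ∈ C₃, x + y ∈ C ∧ x + y ∉ C₀ := by
    intro x hx y hy
    have hdual : ∀ e ∈ C₀, ip (x + y) e = 0 := by
      intro e he
      rw [ip_add_left, hShdual x (Or.inl hx) e he, hShdual y (Or.inr hy) e he, add_zero]
    have hmemC : x + y ∈ C := by
      rcases hdual_cases (x + y) hdual with h|h
      · exact h
      · exfalso
        rcases h with h|h
        · have h1 := (hmem₁ (x + y)).mp h
          have h2 := (hmem₁ x).mp hx
          have : y = (x + a₁) + (x + y + a₁) := by abel_nf; simp [vec_two_nsmul, vec_two_mul]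
          exact hShnC y (Or.inr hy) (hC0C _ (this ▸ hC0add _ h2 _ h1))
        · have h1 := (hmem₃ (x + y)).mp h
          have h2 := (hmem₃ y).mp hy
          have : x = (y + a₃) + (x + y + a₃) := by abel_nf; simp [vec_two_nsmul, vec_two_mul]
          exact hShnC x (Or.inl hx) (hC0C _ (this ▸ hC0add _ h2 _ h1))
    refine ⟨hmemC, ?_⟩
    intro h0
    have h2 := (hmem₃ y).mp hy
    have : x + a₃ = (x + y) + (y + a₃) := by abel_nf; simp [vec_two_nsmul, vec_two_mul]
    have hx3 : x ∈ C₃ := (hmem₃ x).mpr (this ▸ hC0add _ h0 _ h2)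
    exact hC13disj x hx hx3
  -- inner products among shadow vectors
  have hipC1C1 : ∀ x ∈ C₁, ∀ y ∈ C₁, ip x y = 1 := by
    intro x hx y hy
    have hxy : x + y ∈ C₀ := hC1C1 x hx y hy
    have : y = x + (x + y) := by rw [← add_assoc, vec_add_self, zero_add]
    rw [this, ip_add_right, hShdual x (Or.inl hx) _ hxy, add_zero, ip_self,
      hodd x (hShnC x (Or.inl hx)) (hShdual x (Or.inl hx))]
  have hipC3C3 : ∀ x ∈ C₃, ∀ y ∈ C₃, ip x y = 1 := by
    intro x hx y hy
    have hxy : x + y ∈ C₀ := hC3C3 x hx y hy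
    have : y = x + (x + y) := by rw [← add_assoc, vec_add_self, zero_add]
    rw [this, ip_add_right, hShdual x (Or.inr hx) _ hxy, add_zero, ip_self,
      hodd x (hShnC x (Or.inr hx)) (hShdual x (Or.inr hx))]
  have hipC1C3 : ∀ x ∈ C₁, ∀ y ∈ C₃, ip x y = 0 := by
    intro x hx y hy
    obtain ⟨hxyC, hxyC0⟩ := hC13add x hx y hy
    have : y = x + (x + y) := by rw [← add_assoc, vec_add_self, zero_add]
    rw [this, ip_add_right, ip_self,
      hodd x (hShnC x (Or.inl hx)) (hShdual x (Or.inl hx)),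
      hShdual' x (Or.inl hx) _ hxyC hxyC0]
    decide
  -- weights mod 4 are constant on the shadow
  have hQSh_const : ∀ x ∈ C₁ ∪ C₃, (wt x : ZMod 4) = (wt a₁ : ZMod 4) := by
    intro x hx
    rcases hx with hx|hx
    · have hc : a₁ + x ∈ C₀ := hC1C1 a₁ ha₁C₁ x hx
      have hxe : x = a₁ + (a₁ + x) := by rw [← add_assoc, vec_add_self, zero_add]
      rw [hxe, wt4_add_of_ip_zero (hShdual a₁ (Or.inl ha₁C₁) _ hc), hQ0 _ hc, add_zero]
    · obtain ⟨hC', hC0'⟩ := hC13add a₁ ha₁C₁ x hx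
      have hxe : x = a₁ + (a₁ + x) := by rw [← add_assoc, vec_add_self, zero_add]
      rw [hxe, wt4_add_of_ip_one (hShdual' a₁ (Or.inl ha₁C₁) _ hC' hC0'), hQ2 _ hC' hC0']
      have : (2 : ZMod 4) + 2 = 0 := by decide
      rw [add_assoc, this, add_zero]
  
  -- ## Part 4: Gauss sum argument — the shadow weight is ≡ 3 (mod 4)
  have hQa₁ : (wt a₁ : ZMod 4) = 3 := by
    have hf₀ : C₀.Finite := Set.toFinite _
    have hf₂ : ((↑C : Set (Fin n → ZMod 2)) \ C₀).Finite := Set.toFinite _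
    have hf₁ : C₁.Finite := Set.toFinite _
    have hf₃ : C₃.Finite := Set.toFinite _
    have hg := gauss_total hf₀.toFinset
      (by rw [Set.Finite.mem_toFinset]; exact h0C0)
      (by
        intro c hc d hd
        rw [Set.Finite.mem_toFinset] at *
        exact hC0add c hc d hd)
      (by
        intro c hc
        rw [Set.Finite.mem_toFinset] at hc
        rw [← z4_zero_iff]
        exact hQ0 c hc)
    have hfilter : univ.filter (fun x => ∀ c ∈ hf₀.toFinset, ip x c = 0)
        = hf₀.toFinset ∪ (hf₂.toFinset ∪ (hf₁.toFinset ∪ hf₃.toFinset)) := by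
      ext x
      simp only [Finset.mem_filter, Finset.mem_univ, true_and, Finset.mem_union,
        Set.Finite.mem_toFinset]
      constructor
      · intro h
        rcases hdual_cases x h with hC|hSh
        · by_cases h0 : x ∈ C₀
          · exact Or.inl h0
          · exact Or.inr (Or.inl ⟨hC, h0⟩)
        · rcases hSh with h1|h3
          · exact Or.inr (Or.inr (Or.inl h1))
          · exact Or.inr (Or.inr (Or.inr h3))
      · intro h c hc'
        rcases h with h|h|h|h
        · exact hCdual x (hC0C x h) c hc'
        · exact hCdual x h.1 c hc'
        · exact hShdual x (Or.inl h) c hc'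
        · exact hShdual x (Or.inr h) c hc'
    have hdisj1 : Disjoint hf₀.toFinset (hf₂.toFinset ∪ (hf₁.toFinset ∪ hf₃.toFinset)) := by
      rw [Finset.disjoint_left]
      intro x hx hx'
      rw [Set.Finite.mem_toFinset] at hx
      simp only [Finset.mem_union, Set.Finite.mem_toFinset] at hx'
      rcases hx' with h|h|h
      · exact h.2 hx
      · exact hShnC x (Or.inl h) (hC0C x hx)
      · exact hShnC x (Or.inr h) (hC0C x hx)
    have hdisj2 : Disjoint hf₂.toFinset (hf₁.toFinset ∪ hf₃.toFinset) := by
      rw [Finset.disjoint_left]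
      intro x hx hx'
      rw [Set.Finite.mem_toFinset] at hx
      simp only [Finset.mem_union, Set.Finite.mem_toFinset] at hx'
      rcases hx' with h|h
      · exact hShnC x (Or.inl h) hx.1
      · exact hShnC x (Or.inr h) hx.1
    have hdisj3 : Disjoint hf₁.toFinset hf₃.toFinset := by
      rw [Finset.disjoint_left]
      intro x hx hx'
      rw [Set.Finite.mem_toFinset] at hx hx'
      exact hC13disj x hx hx'
    rw [hfilter, Finset.sum_union hdisj1, Finset.sum_union hdisj2,
      Finset.sum_union hdisj3] at hg
    have hsum₀ : ∑ x ∈ hf₀.toFinset, Complex.I ^ wt x = (hf₀.toFinset.card : ℂ) := by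
      rw [Finset.sum_congr rfl
        (fun c hc => I_pow_z4 (hQ0 c (hf₀.mem_toFinset.mp hc)))]
      rw [Finset.sum_const, show ((0 : ZMod 4)).val = 0 from rfl, pow_zero, nsmul_eq_mul, mul_one]
    have hsum₂ : ∑ x ∈ hf₂.toFinset, Complex.I ^ wt x = -(hf₂.toFinset.card : ℂ) := by
      rw [Finset.sum_congr rfl
        (fun c hc => I_pow_z4 (hQ2 c (hf₂.mem_toFinset.mp hc).1 (hf₂.mem_toFinset.mp hc).2))]
      rw [Finset.sum_const, show ((2 : ZMod 4)).val = 2 from rfl, Complex.I_sq, nsmul_eq_mul]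
      ring
    have hsum₁ : ∑ x ∈ hf₁.toFinset, Complex.I ^ wt x
        = (hf₁.toFinset.card : ℂ) * Complex.I ^ ((wt a₁ : ZMod 4)).val := by
      rw [Finset.sum_congr rfl
        (fun c hc => I_pow_z4 (hQSh_const c (Or.inl (hf₁.mem_toFinset.mp hc))))]
      rw [Finset.sum_const, nsmul_eq_mul]
    have hsum₃ : ∑ x ∈ hf₃.toFinset, Complex.I ^ wt x
        = (hf₃.toFinset.card : ℂ) * Complex.I ^ ((wt a₁ : ZMod 4)).val := by
      rw [Finset.sum_congr rfl
        (fun c hc => I_pow_z4 (hQSh_const c (Or.inr (hf₃.mem_toFinset.mp hc))))]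
      rw [Finset.sum_const, nsmul_eq_mul]
    have hcard₂ : hf₂.toFinset.card = hf₀.toFinset.card := by
      refine (Finset.card_bij' (fun c _ => c + ones) (fun c _ => c + ones) ?_ ?_ ?_ ?_).symm
      · intro c hc
        rw [Set.Finite.mem_toFinset] at hc ⊢
        refine ⟨C.add_mem (hC0C c hc) honesC, ?_⟩
        intro hmem
        exact honesC0 (hsubC0 c ones hc hmem)
      · intro c hc
        rw [Set.Finite.mem_toFinset] at hc ⊢
        refine (hmemC0 _).mpr ⟨C.add_mem hc.1 honesC, ?_⟩
        rw [wt4_add_of_ip_zero (hipC c hc.1 ones honesC), hQ2 c hc.1 hc.2, hQones]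
        decide
      · intro c _
        show c + ones + ones = c
        rw [add_assoc, vec_add_self, add_zero]
      · intro c _
        show c + ones + ones = c
        rw [add_assoc, vec_add_self, add_zero]
    have hcard₁ : hf₁.toFinset.card = hf₀.toFinset.card := by
      refine (Finset.card_bij' (fun c _ => c + a₁) (fun c _ => c + a₁) ?_ ?_ ?_ ?_).symm
      · intro c hc
        rw [Set.Finite.mem_toFinset] at hc ⊢
        rw [hmem₁, add_assoc, vec_add_self, add_zero]
        exact hc
      · intro c hc
        rw [Set.Finite.mem_toFinset] at hc ⊢
        exact (hmem₁ c).mp hc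
      · intro c _
        show c + a₁ + a₁ = c
        rw [add_assoc, vec_add_self, add_zero]
      · intro c _
        show c + a₁ + a₁ = c
        rw [add_assoc, vec_add_self, add_zero]
    have hcard₃ : hf₃.toFinset.card = hf₀.toFinset.card := by
      refine (Finset.card_bij' (fun c _ => c + a₃) (fun c _ => c + a₃) ?_ ?_ ?_ ?_).symm
      · intro c hc
        rw [Set.Finite.mem_toFinset] at hc ⊢
        rw [hmem₃, add_assoc, vec_add_self, add_zero]
        exact hc
      · intro c hc
        rw [Set.Finite.mem_toFinset] at hc ⊢
        exact (hmem₃ c).mp hc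
      · intro c _
        show c + a₃ + a₃ = c
        rw [add_assoc, vec_add_self, add_zero]
      · intro c _
        show c + a₃ + a₃ = c
        rw [add_assoc, vec_add_self, add_zero]
    rw [hsum₀, hsum₂, hsum₁, hsum₃, hcard₂, hcard₁, hcard₃] at hg
    have key : 2 * (hf₀.toFinset.card : ℂ) * Complex.I ^ ((wt a₁ : ZMod 4)).val
        = (1 + Complex.I)^n := by
      linear_combination hg
    have hI2 : ((1:ℂ) + Complex.I)^2 = 2 * Complex.I := by linear_combination Complex.I_sq
    have h4' : ((1:ℂ) + Complex.I)^4 = -4 := by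
      rw [show ((1:ℂ) + Complex.I)^4 = (((1 + Complex.I)^2))^2 by ring, hI2,
        show ((2:ℂ) * Complex.I)^2 = 4 * Complex.I^2 by ring, Complex.I_sq]
      ring
    have h8' : ((1:ℂ) + Complex.I)^8 = 16 := by
      rw [show ((1:ℂ) + Complex.I)^8 = (((1 + Complex.I)^4))^2 by ring, h4']
      norm_num
    have h6' : ((1:ℂ) + Complex.I)^6 = -(8 * Complex.I) := by
      rw [show ((1:ℂ) + Complex.I)^6 = ((1 + Complex.I)^4) * ((1 + Complex.I)^2) by ring,
        h4', hI2]
      ring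
    have hpow : ((1:ℂ) + Complex.I)^n = (16^k : ℂ) * (-(8 * Complex.I)) := by
      rw [hk, pow_add, pow_mul, h8', h6']
    rcases z4_odd (wt a₁)
        (hodd a₁ (hShnC a₁ (Or.inl ha₁C₁)) (hShdual a₁ (Or.inl ha₁C₁))) with h1|h3
    · exfalso
      rw [h1, show ((1 : ZMod 4)).val = 1 from rfl, pow_one] at key
      rw [hpow] at key
      have key2 : (2 * (hf₀.toFinset.card : ℂ)) = -(8 * 16^k) := by
        apply mul_right_cancel₀ Complex.I_ne_zero
        linear_combination key
      have keyn : ((2 * hf₀.toFinset.card + 8 * 16^k : ℕ) : ℂ) = 0 := by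
        push_cast
        linear_combination key2
      have h0 := Nat.cast_eq_zero.mp keyn
      have hpos : 0 < 16^k := pow_pos (by norm_num) k
      omega
    · exact h3
  
  -- ## Part 5: the construction
  set U : Set (Fin (n + 2) → ZMod 2) :=
      (fun v => Fin.snoc (Fin.snoc v (0 : ZMod 2)) (0 : ZMod 2)) '' C₀ ∪
      (fun v => Fin.snoc (Fin.snoc v (1 : ZMod 2)) (1 : ZMod 2)) '' ((↑C : Set _) \ C₀) ∪
      (fun v => Fin.snoc (Fin.snoc v (1 : ZMod 2)) (0 : ZMod 2)) '' C₁ ∪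
      (fun v => Fin.snoc (Fin.snoc v (0 : ZMod 2)) (1 : ZMod 2)) '' C₃ with hUdef
  have hUmem : ∀ z : Fin (n+2) → ZMod 2, z ∈ U ↔ ∃ v a b, z = Fin.snoc (Fin.snoc v a) b ∧
      ((v ∈ C₀ ∧ a = 0 ∧ b = 0) ∨ (v ∈ (↑C : Set _) \ C₀ ∧ a = 1 ∧ b = 1) ∨
       (v ∈ C₁ ∧ a = 1 ∧ b = 0) ∨ (v ∈ C₃ ∧ a = 0 ∧ b = 1)) := by
    intro z
    rw [hUdef]
    simp only [Set.mem_union, Set.mem_image]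
    constructor
    · rintro (((⟨v,hv,rfl⟩|⟨v,hv,rfl⟩)|⟨v,hv,rfl⟩)|⟨v,hv,rfl⟩)
      · exact ⟨v, 0, 0, rfl, Or.inl ⟨hv, rfl, rfl⟩⟩
      · exact ⟨v, 1, 1, rfl, Or.inr (Or.inl ⟨hv, rfl, rfl⟩)⟩
      · exact ⟨v, 1, 0, rfl, Or.inr (Or.inr (Or.inl ⟨hv, rfl, rfl⟩))⟩
      · exact ⟨v, 0, 1, rfl, Or.inr (Or.inr (Or.inr ⟨hv, rfl, rfl⟩))⟩
    · rintro ⟨v, a, b, rfl, (⟨hv,rfl,rfl⟩|⟨hv,rfl,rfl⟩|⟨hv,rfl,rfl⟩|⟨hv,rfl,rfl⟩)⟩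
      · exact Or.inl (Or.inl (Or.inl ⟨v, hv, rfl⟩))
      · exact Or.inl (Or.inl (Or.inr ⟨v, hv, rfl⟩))
      · exact Or.inl (Or.inr ⟨v, hv, rfl⟩)
      · exact Or.inr ⟨v, hv, rfl⟩
  have hmem11 : ∀ v ∈ C₀, ∀ w ∈ (↑C : Set (Fin n → ZMod 2)) \ C₀,
      v + w ∈ (↑C : Set (Fin n → ZMod 2)) \ C₀ := by
    intro v hv w hw
    exact ⟨C.add_mem (hC0C v hv) hw.1, fun h => hw.2 (hsubC0 v w hv h)⟩
  have hmem1111 : ∀ v ∈ (↑C : Set (Fin n → ZMod 2)) \ C₀,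
      ∀ w ∈ (↑C : Set (Fin n → ZMod 2)) \ C₀, v + w ∈ C₀ := by
    intro v hv w hw
    refine (hmemC0 _).mpr ⟨C.add_mem hv.1 hw.1, ?_⟩
    rw [wt4_add_of_ip_zero (hipC v hv.1 w hw.1), hQ2 v hv.1 hv.2, hQ2 w hw.1 hw.2]
    decide
  have hadd_core : ∀ (v w : Fin n → ZMod 2) (a b c d : ZMod 2),
      ((v ∈ C₀ ∧ a = 0 ∧ b = 0) ∨ (v ∈ (↑C : Set _) \ C₀ ∧ a = 1 ∧ b = 1) ∨
        (v ∈ C₁ ∧ a = 1 ∧ b = 0) ∨ (v ∈ C₃ ∧ a = 0 ∧ b = 1)) →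
      ((w ∈ C₀ ∧ c = 0 ∧ d = 0) ∨ (w ∈ (↑C : Set _) \ C₀ ∧ c = 1 ∧ d = 1) ∨
        (w ∈ C₁ ∧ c = 1 ∧ d = 0) ∨ (w ∈ C₃ ∧ c = 0 ∧ d = 1)) →
      ((v + w ∈ C₀ ∧ a + c = 0 ∧ b + d = 0) ∨
        (v + w ∈ (↑C : Set _) \ C₀ ∧ a + c = 1 ∧ b + d = 1) ∨
        (v + w ∈ C₁ ∧ a + c = 1 ∧ b + d = 0) ∨ (v + w ∈ C₃ ∧ a + c = 0 ∧ b + d = 1)) := by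
    rintro v w a b c d
      (⟨hv,rfl,rfl⟩|⟨hv,rfl,rfl⟩|⟨hv,rfl,rfl⟩|⟨hv,rfl,rfl⟩)
      (⟨hw,rfl,rfl⟩|⟨hw,rfl,rfl⟩|⟨hw,rfl,rfl⟩|⟨hw,rfl,rfl⟩)
    · exact Or.inl ⟨hC0add v hv w hw, by decide, by decide⟩
    · exact Or.inr (Or.inl ⟨hmem11 v hv w hw, by decide, by decide⟩)
    · rw [add_comm v w]
      exact Or.inr (Or.inr (Or.inl ⟨hC1add0 w hw v hv, by decide, by decide⟩))
    · rw [add_comm v w]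
      exact Or.inr (Or.inr (Or.inr ⟨hC3add0 w hw v hv, by decide, by decide⟩))
    · rw [add_comm v w]
      exact Or.inr (Or.inl ⟨hmem11 w hw v hv, by decide, by decide⟩)
    · exact Or.inl ⟨hmem1111 v hv w hw, by decide, by decide⟩
    · rw [add_comm v w]
      exact Or.inr (Or.inr (Or.inr ⟨hC1add2 w hw v hv.1 hv.2, by decide, by decide⟩))
    · rw [add_comm v w]
      exact Or.inr (Or.inr (Or.inl ⟨hC3add2 w hw v hv.1 hv.2, by decide, by decide⟩))
    · exact Or.inr (Or.inr (Or.inl ⟨hC1add0 v hv w hw, by decide, by decide⟩))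
    · exact Or.inr (Or.inr (Or.inr ⟨hC1add2 v hv w hw.1 hw.2, by decide, by decide⟩))
    · exact Or.inl ⟨hC1C1 v hv w hw, by decide, by decide⟩
    · exact Or.inr (Or.inl ⟨hC13add v hv w hw, by decide, by decide⟩)
    · exact Or.inr (Or.inr (Or.inr ⟨hC3add0 v hv w hw, by decide, by decide⟩))
    · exact Or.inr (Or.inr (Or.inl ⟨hC3add2 v hv w hw.1 hw.2, by decide, by decide⟩))
    · rw [add_comm v w]
      exact Or.inr (Or.inl ⟨hC13add w hw v hv, by decide, by decide⟩)
    · exact Or.inl ⟨hC3C3 v hv w hw, by decide, by decide⟩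
  have horth_core : ∀ (v w : Fin n → ZMod 2) (a b c d : ZMod 2),
      ((v ∈ C₀ ∧ a = 0 ∧ b = 0) ∨ (v ∈ (↑C : Set _) \ C₀ ∧ a = 1 ∧ b = 1) ∨
        (v ∈ C₁ ∧ a = 1 ∧ b = 0) ∨ (v ∈ C₃ ∧ a = 0 ∧ b = 1)) →
      ((w ∈ C₀ ∧ c = 0 ∧ d = 0) ∨ (w ∈ (↑C : Set _) \ C₀ ∧ c = 1 ∧ d = 1) ∨
        (w ∈ C₁ ∧ c = 1 ∧ d = 0) ∨ (w ∈ C₃ ∧ c = 0 ∧ d = 1)) →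
      ip v w + a * c + b * d = 0 := by
    rintro v w a b c d
      (⟨hv,rfl,rfl⟩|⟨hv,rfl,rfl⟩|⟨hv,rfl,rfl⟩|⟨hv,rfl,rfl⟩)
      (⟨hw,rfl,rfl⟩|⟨hw,rfl,rfl⟩|⟨hw,rfl,rfl⟩|⟨hw,rfl,rfl⟩)
    · rw [hipC v (hC0C v hv) w (hC0C w hw)]; decide
    · rw [hipC v (hC0C v hv) w hw.1]; decide
    · rw [ip_comm, hShdual w (Or.inl hw) v hv]; decide
    · rw [ip_comm, hShdual w (Or.inr hw) v hv]; decide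
    · rw [hipC v hv.1 w (hC0C w hw)]; decide
    · rw [hipC v hv.1 w hw.1]; decide
    · rw [ip_comm, hShdual' w (Or.inl hw) v hv.1 hv.2]; decide
    · rw [ip_comm, hShdual' w (Or.inr hw) v hv.1 hv.2]; decide
    · rw [hShdual v (Or.inl hv) w hw]; decide
    · rw [hShdual' v (Or.inl hv) w hw.1 hw.2]; decide
    · rw [hipC1C1 v hv w hw]; decide
    · rw [hipC1C3 v hv w hw]; decide
    · rw [hShdual v (Or.inr hv) w hw]; decide
    · rw [hShdual' v (Or.inr hv) w hw.1 hw.2]; decide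
    · rw [ip_comm, hipC1C3 w hw v hv]; decide
    · rw [hipC3C3 v hv w hw]; decide
  have hzeroU : (0 : Fin (n+2) → ZMod 2) ∈ U :=
    (hUmem 0).mpr ⟨0, 0, 0, by rw [snoc_zero, snoc_zero], Or.inl ⟨h0C0, rfl, rfl⟩⟩
  have haddU : ∀ x y : Fin (n+2) → ZMod 2, x ∈ U → y ∈ U → x + y ∈ U := by
    intro x y hx hy
    obtain ⟨v, a, b, rfl, hcv⟩ := (hUmem x).mp hx
    obtain ⟨w, c, d, rfl, hcw⟩ := (hUmem y).mp hy
    exact (hUmem _).mpr ⟨v + w, a + c, b + d, by rw [snoc_add, snoc_add],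
      hadd_core v w a b c d hcv hcw⟩
  have hsmulU : ∀ (m : ZMod 2) (x : Fin (n+2) → ZMod 2), x ∈ U → m • x ∈ U := by
    intro m x hx
    rcases zmod2_cases m with rfl|rfl
    · rw [zero_smul]; exact hzeroU
    · rw [one_smul]; exact hx
  refine ⟨{ carrier := U, add_mem' := fun {x y} hx hy => haddU x y hx hy,
            zero_mem' := hzeroU, smul_mem' := fun m x hx => hsmulU m x hx }, rfl, ?_, ?_⟩
  · -- self-dual
    apply SetLike.ext
    intro z
    constructor
    · intro hz
      have hzU : ∀ y ∈ U, ip z y = 0 := fun y hy => hz y hy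
      have h1 : Fin.snoc (Fin.init (Fin.init z)) (Fin.init z (Fin.last n)) = Fin.init z :=
        Fin.snoc_init_self _
      have h2 : Fin.snoc (Fin.init z) (z (Fin.last (n+1))) = z := Fin.snoc_init_self _
      obtain ⟨v, a, b, hzeq⟩ : ∃ v a b, z = Fin.snoc (Fin.snoc v a) b :=
        ⟨Fin.init (Fin.init z), Fin.init z (Fin.last n), z (Fin.last (n+1)), by rw [h1, h2]⟩
      have hvd : ∀ c ∈ C₀, ip v c = 0 := by
        intro c hc
        have hm := hzU _ ((hUmem _).mpr ⟨c, 0, 0, rfl, Or.inl ⟨hc, rfl, rfl⟩⟩)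
        rw [hzeq, ip_snoc, ip_snoc, mul_zero, mul_zero, add_zero, add_zero] at hm
        exact hm
      have ht1 : ip v ones + a + b = 0 := by
        have hm := hzU _ ((hUmem _).mpr ⟨ones, 1, 1, rfl,
          Or.inr (Or.inl ⟨⟨honesC, honesC0⟩, rfl, rfl⟩)⟩)
        rw [hzeq, ip_snoc, ip_snoc, mul_one, mul_one] at hm
        exact hm
      have ht2 : ip v a₁ + a = 0 := by
        have hm := hzU _ ((hUmem _).mpr ⟨a₁, 1, 0, rfl,
          Or.inr (Or.inr (Or.inl ⟨ha₁C₁, rfl, rfl⟩))⟩)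
        rw [hzeq, ip_snoc, ip_snoc, mul_one, mul_zero, add_zero] at hm
        exact hm
      show z ∈ U
      rcases hdual_cases v hvd with hvC|hvSh
      · by_cases hv0 : v ∈ C₀
        · have hA : a = 0 := by
            rw [ip_comm, hShdual a₁ (Or.inl ha₁C₁) v hv0, zero_add] at ht2
            exact ht2
          have hB : b = 0 := by
            rw [hipC v (hC0C v hv0) ones honesC, zero_add, hA, zero_add] at ht1
            exact ht1
          exact (hUmem z).mpr ⟨v, a, b, hzeq, Or.inl ⟨hv0, hA, hB⟩⟩
        · have hA : a = 1 := by
            rw [ip_comm, hShdual' a₁ (Or.inl ha₁C₁) v hvC hv0] at ht2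
            rcases zmod2_cases a with rfl|rfl
            · exact absurd ht2 (by decide)
            · rfl
          have hB : b = 1 := by
            rw [hipC v hvC ones honesC, zero_add, hA] at ht1
            rcases zmod2_cases b with rfl|rfl
            · exact absurd ht1 (by decide)
            · rfl
          exact (hUmem z).mpr ⟨v, a, b, hzeq, Or.inr (Or.inl ⟨⟨hvC, hv0⟩, hA, hB⟩)⟩
      · rcases hvSh with hv1|hv3
        · have hA : a = 1 := by
            rw [hipC1C1 v hv1 a₁ ha₁C₁] at ht2
            rcases zmod2_cases a with rfl|rfl
            · exact absurd ht2 (by decide)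
            · rfl
          have hB : b = 0 := by
            rw [hShdual' v (Or.inl hv1) ones honesC honesC0, hA] at ht1
            rcases zmod2_cases b with rfl|rfl
            · rfl
            · exact absurd ht1 (by decide)
          exact (hUmem z).mpr ⟨v, a, b, hzeq, Or.inr (Or.inr (Or.inl ⟨hv1, hA, hB⟩))⟩
        · have hA : a = 0 := by
            rw [ip_comm, hipC1C3 a₁ ha₁C₁ v hv3, zero_add] at ht2
            exact ht2
          have hB : b = 1 := by
            rw [hShdual' v (Or.inr hv3) ones honesC honesC0, hA, add_zero] at ht1
            rcases zmod2_cases b with rfl|rfl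
            · exact absurd ht1 (by decide)
            · rfl
          exact (hUmem z).mpr ⟨v, a, b, hzeq, Or.inr (Or.inr (Or.inr ⟨hv3, hA, hB⟩))⟩
    · intro hz
      intro y hy
      obtain ⟨v, a, b, rfl, hcv⟩ := (hUmem z).mp hz
      obtain ⟨w, c, d, rfl, hcw⟩ := (hUmem y).mp hy
      show ip _ _ = 0
      rw [ip_snoc, ip_snoc]
      exact horth_core v w a b c d hcv hcw
  · -- doubly even
    intro z hz
    obtain ⟨v, a, b, rfl, hcv⟩ := (hUmem z).mp hz
    have e0 : (if (0:ZMod 2) ≠ 0 then 1 else 0) = 0 := by decide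
    have e1 : (if (1:ZMod 2) ≠ 0 then 1 else 0) = 1 := by decide
    rw [wt_snoc, wt_snoc]
    rcases hcv with ⟨hv,rfl,rfl⟩|⟨hv,rfl,rfl⟩|⟨hv,rfl,rfl⟩|⟨hv,rfl,rfl⟩
    · rw [e0]
      have h4 := (z4_zero_iff _).mp (hQ0 v hv)
      omega
    · rw [e1]
      have h4 : wt v % 4 = 2 := by
        have h := congrArg ZMod.val (hQ2 v hv.1 hv.2)
        rw [ZMod.val_natCast] at h
        rw [h]
        rfl
      omega
    · rw [e1, e0]
      have h4 : wt v % 4 = 3 := by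
        have h := congrArg ZMod.val ((hQSh_const v (Or.inl hv)).trans hQa₁)
        rw [ZMod.val_natCast] at h
        rw [h]
        rfl
      omega
    · rw [e0, e1]
      have h4 : wt v % 4 = 3 := by
        have h := congrArg ZMod.val ((hQSh_const v (Or.inr hv)).trans hQa₁)
        rw [ZMod.val_natCast] at h
        rw [h]
        rfl
      omega
end

section
/- Every binary doubly even self-dual code of length 40 has minimum weight 4 or 8; that is, every such code contains a nonzero codeword of weight at most 8, and hence of weight exactly 4 or exactly 8. -/
open Finset

/-! ### Auxiliary lemmas -/

lemma mem_dualCode {n : ℕ} {C : Submodule (ZMod 2) (Fin n → ZMod 2)} {x : Fin n → ZMod 2} :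
    x ∈ dualCode C ↔ ∀ y ∈ C, ∑ i, x i * y i = 0 := Iff.rfl

lemma zmod2_ne_iff {a : ZMod 2} : a ≠ 0 ↔ a = 1 := by revert a; decide

lemma wt_eq_zero_iff {n : ℕ} {x : Fin n → ZMod 2} : wt x = 0 ↔ x = 0 := by
  constructor
  · intro h
    funext i
    have := Finset.card_eq_zero.1 h
    rw [Finset.filter_eq_empty_iff] at this
    have := this (Finset.mem_univ i)
    simpa using this
  · intro h; subst h; simp [wt]

/-- The all-ones vector. -/
def onesV : Fin 40 → ZMod 2 := fun _ => 1

lemma sum_eq_wt (y : Fin 40 → ZMod 2) : ∑ i, y i = (wt y : ZMod 2) := by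
  rw [wt, ← Finset.sum_filter_ne_zero Finset.univ]
  rw [Finset.sum_congr rfl (fun i hi => (zmod2_ne_iff.1 (Finset.mem_filter.1 hi).2))]
  simp [mul_comm]

lemma ones_mem {C : Submodule (ZMod 2) (Fin 40 → ZMod 2)}
    (hSD : isSelfDual C) (hDE : isDoublyEven C) : onesV ∈ C := by
  rw [← hSD, mem_dualCode]
  intro y hy
  have : ∑ i, onesV i * y i = ∑ i, y i := by simp [onesV]
  rw [this, sum_eq_wt y]
  obtain ⟨m, hm⟩ := hDE y hy
  rw [hm]
  push_cast
  have : (4 : ZMod 2) = 0 := by decide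
  rw [this, zero_mul]

lemma wt_le_forty (x : Fin 40 → ZMod 2) : wt x ≤ 40 :=
  le_trans (Finset.card_filter_le _ _) (by simp)

lemma wt_compl (x : Fin 40 → ZMod 2) : wt (x + onesV) = 40 - wt x := by
  have h : (Finset.univ.filter fun i => (x + onesV) i ≠ 0)
      = Finset.univ \ (Finset.univ.filter fun i => x i ≠ 0) := by
    rw [← Finset.filter_not]
    apply Finset.filter_congr
    intro i _
    simp only [Pi.add_apply, onesV]
    generalize x i = a
    revert a; decide
  rw [wt, h, Finset.card_sdiff_of_subset (Finset.filter_subset _ _)]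
  simp [wt]

/-- If all nonzero codewords of a self-dual code have weight at least 12, then the projection
of the code onto any set of at most 11 coordinates is surjective. -/
lemma exists_codeword_on {C : Submodule (ZMod 2) (Fin 40 → ZMod 2)}
    (hSD : isSelfDual C) (hmin : ∀ x ∈ C, x ≠ 0 → 12 ≤ wt x)
    (S : Finset (Fin 40)) (hS : S.card ≤ 11) (δ : Fin 40 → ZMod 2) :
    ∃ z ∈ C, ∀ i ∈ S, z i = δ i := by
  classical
  set L : (Fin 40 → ZMod 2) →ₗ[ZMod 2] (↥S → ZMod 2) :=
    LinearMap.funLeft (ZMod 2) (ZMod 2) (fun i : ↥S => (i : Fin 40)) with hL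
  have hW : Submodule.map L C = ⊤ := by
    by_contra hne
    obtain ⟨f, hf0, hfbot⟩ :=
      Submodule.exists_dual_map_eq_bot_of_lt_top (lt_top_iff_ne_top.2 hne) inferInstance
    set c : Fin 40 → ZMod 2 := fun j =>
      if h : j ∈ S then f (fun k : ↥S => if (⟨j, h⟩ : ↥S) = k then 1 else 0) else 0 with hc
    have hci : ∀ i : ↥S, c i = f (fun k : ↥S => if i = k then 1 else 0) := by
      intro i
      rw [hc]
      simp only [i.2, dif_pos]
    have hfvan : ∀ w ∈ Submodule.map L C, f w = 0 := by
      intro w hw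
      have : f w ∈ Submodule.map f (Submodule.map L C) := Submodule.mem_map_of_mem hw
      rw [hfbot] at this
      exact (Submodule.mem_bot (ZMod 2)).1 this
    have hcC : c ∈ C := by
      rw [← hSD, mem_dualCode]
      intro y hy
      have h1 : ∑ j ∈ S, c j * y j = ∑ j, c j * y j := by
        apply Finset.sum_subset (Finset.subset_univ S)
        intro j _ hj
        rw [hc]
        simp [dif_neg hj]
      have h2 : ∑ i : ↥S, c i * y i = ∑ j ∈ S, c j * y j :=
        Finset.sum_coe_sort S (fun j => c j * y j)
      have h3 : f (L y) = ∑ i : ↥S, c i * y i := by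
        rw [LinearMap.pi_apply_eq_sum_univ f (L y)]
        apply Finset.sum_congr rfl
        intro i _
        rw [hci i]
        simp only [hL, LinearMap.funLeft_apply, Function.comp]
        rw [smul_eq_mul, mul_comm]
      rw [← h1, ← h2, ← h3]
      exact hfvan _ (Submodule.mem_map_of_mem hy)
    have hcne : c ≠ 0 := by
      obtain ⟨v, hv⟩ : ∃ v, f v ≠ 0 := by
        by_contra h
        push_neg at h
        exact hf0 (LinearMap.ext h)
      rw [LinearMap.pi_apply_eq_sum_univ f v] at hv
      obtain ⟨i, -, hi⟩ := Finset.exists_ne_zero_of_sum_ne_zero hv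
      have hfb : f (fun k : ↥S => if i = k then 1 else 0) ≠ 0 := by
        intro h
        rw [h, smul_zero] at hi
        exact hi rfl
      intro h0
      apply hfb
      rw [← hci i, h0]
      rfl
    have hwt : wt c ≤ S.card := by
      apply Finset.card_le_card
      intro j hj
      rw [Finset.mem_filter] at hj
      by_contra hjS
      apply hj.2
      rw [hc]
      simp [dif_neg hjS]
    have := hmin c hcC hcne
    omega
  have hmem : (fun i : ↥S => δ i) ∈ Submodule.map L C := by rw [hW]; trivial
  obtain ⟨z, hzC, hz⟩ := hmem
  refine ⟨z, hzC, fun i hi => ?_⟩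
  have := congrFun hz (⟨i, hi⟩ : ↥S)
  simpa [hL, LinearMap.funLeft_apply] using this

/-- The code as a finite set. -/
noncomputable def Cset (C : Submodule (ZMod 2) (Fin 40 → ZMod 2)) : Finset (Fin 40 → ZMod 2) :=
  (Set.toFinite (C : Set (Fin 40 → ZMod 2))).toFinset

lemma mem_Cset {C : Submodule (ZMod 2) (Fin 40 → ZMod 2)} {x : Fin 40 → ZMod 2} :
    x ∈ Cset C ↔ x ∈ C := Set.Finite.mem_toFinset _

set_option maxRecDepth 8000 in
/-- Fibers of the projection onto at most 11 coordinates all have the same size. -/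
lemma fiber_card {C : Submodule (ZMod 2) (Fin 40 → ZMod 2)}
    (hSD : isSelfDual C) (hmin : ∀ x ∈ C, x ≠ 0 → 12 ≤ wt x)
    (S : Finset (Fin 40)) (hS : S.card ≤ 11) :
    2 ^ S.card * ((Cset C).filter fun x => ∀ i ∈ S, x i = 1).card = (Cset C).card := by
  classical
  have hab : ∀ a b : ZMod 2, a + (1 + a) = 1 := by decide
  have hbb : ∀ a b : ZMod 2, a + b + b = a := by decide
  have hfib : ∀ ε : ↥S → ZMod 2,
      ((Cset C).filter fun x => (fun i : ↥S => x i) = ε).card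
      = ((Cset C).filter fun x => ∀ i ∈ S, x i = 1).card := by
    intro ε
    obtain ⟨z, hzC, hz⟩ := exists_codeword_on hSD hmin S hS
      (fun j => if h : j ∈ S then 1 + ε ⟨j, h⟩ else 0)
    have hzi : ∀ (i : Fin 40) (hi : i ∈ S), z i = 1 + ε ⟨i, hi⟩ := by
      intro i hi
      rw [hz i hi, dif_pos hi]
    refine Finset.card_bij' (fun x _ => x + z) (fun y _ => y + z) ?_ ?_ ?_ ?_
    · intro x hx
      rw [Finset.mem_filter] at hx ⊢
      obtain ⟨hx1, hx2⟩ := hx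
      refine ⟨mem_Cset.2 (add_mem (mem_Cset.1 hx1) hzC), ?_⟩
      intro i hi
      have hxi : x i = ε ⟨i, hi⟩ := congrFun hx2 ⟨i, hi⟩
      simp only [Pi.add_apply, hxi, hzi i hi]
      exact hab _ 0
    · intro y hy
      rw [Finset.mem_filter] at hy ⊢
      obtain ⟨hy1, hy2⟩ := hy
      refine ⟨mem_Cset.2 (add_mem (mem_Cset.1 hy1) hzC), ?_⟩
      funext i
      simp only [Pi.add_apply, hy2 i i.2, hzi i i.2]
      have : ∀ a : ZMod 2, 1 + (1 + a) = a := by decide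
      exact this _
    · intro x _
      funext i
      simp only [Pi.add_apply]
      exact hbb (x i) (z i)
    · intro y _
      funext i
      simp only [Pi.add_apply]
      exact hbb (y i) (z i)
  have hcard := Finset.card_eq_sum_card_fiberwise
    (s := Cset C) (t := (Finset.univ : Finset (↥S → ZMod 2)))
    (f := fun x => fun i : ↥S => x i) (fun x _ => Finset.mem_univ _)
  rw [hcard, Finset.sum_congr rfl (fun ε _ => hfib ε), Finset.sum_const, Finset.card_univ,
    Fintype.card_fun, Fintype.card_coe, smul_eq_mul, ZMod.card]

/-- The binomial moments of the weight distribution. -/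
lemma moment {C : Submodule (ZMod 2) (Fin 40 → ZMod 2)}
    (hSD : isSelfDual C) (hmin : ∀ x ∈ C, x ≠ 0 → 12 ≤ wt x)
    (t : ℕ) (ht : t ≤ 11) :
    2 ^ t * ∑ x ∈ Cset C, (wt x).choose t = Nat.choose 40 t * (Cset C).card := by
  classical
  have h1 : ∀ x : Fin 40 → ZMod 2, (wt x).choose t
      = ∑ S ∈ Finset.powersetCard t (Finset.univ : Finset (Fin 40)),
          if (∀ i ∈ S, x i = 1) then 1 else 0 := by
    intro x
    have e1 : Finset.powersetCard t (Finset.univ.filter fun i => x i ≠ 0)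
        = (Finset.powersetCard t (Finset.univ : Finset (Fin 40))).filter
            (fun S => ∀ i ∈ S, x i = 1) := by
      ext S
      constructor
      · intro hS
        obtain ⟨hsub, hcard⟩ := Finset.mem_powersetCard.1 hS
        refine Finset.mem_filter.2 ⟨Finset.mem_powersetCard.2
          ⟨Finset.subset_univ S, hcard⟩, fun i hi => ?_⟩
        exact zmod2_ne_iff.1 (Finset.mem_filter.1 (hsub hi)).2
      · intro hS
        obtain ⟨hmem, hall⟩ := Finset.mem_filter.1 hS
        obtain ⟨-, hcard⟩ := Finset.mem_powersetCard.1 hmem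
        refine Finset.mem_powersetCard.2
          ⟨fun i hi => Finset.mem_filter.2 ⟨Finset.mem_univ i, ?_⟩, hcard⟩
        rw [hall i hi]
        exact one_ne_zero
    have e2 : (wt x).choose t = ((Finset.univ.filter fun i => x i ≠ 0).card).choose t := rfl
    rw [e2, ← Finset.card_powersetCard, e1, Finset.card_filter]
  rw [Finset.sum_congr rfl (fun x _ => h1 x), Finset.sum_comm, Finset.mul_sum]
  have h2 : ∀ S ∈ Finset.powersetCard t (Finset.univ : Finset (Fin 40)),
      2 ^ t * ∑ x ∈ Cset C, (if (∀ i ∈ S, x i = 1) then 1 else 0)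
        = (Cset C).card := by
    intro S hS
    obtain ⟨-, hcard⟩ := Finset.mem_powersetCard.1 hS
    rw [← Finset.card_filter]
    rw [← hcard]
    exact fiber_card hSD hmin S (by omega)
  rw [Finset.sum_congr rfl h2, Finset.sum_const, smul_eq_mul, Finset.card_powersetCard,
    Finset.card_univ, Fintype.card_fin]

/-- The magic linear combination of binomial coefficients: it vanishes at 12, 16, 20, 24, 28,
and its binomial-moment expectation against `Bin(40, 1/2)` also vanishes. -/
noncomputable def Gfun (w : ℕ) : ℚ :=
  16782151680 - 4018831209 * (w.choose 1 : ℚ) + 778329186 * (w.choose 2 : ℚ)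
    - 111318291 * (w.choose 3 : ℚ) + 9353124 * (w.choose 4 : ℚ)
    - 71352 * (w.choose 6 : ℚ) + 512 * (w.choose 8 : ℚ)

lemma Gfun_vanish {w : ℕ} (h12 : 12 ≤ w) (h28 : w ≤ 28) (h4 : 4 ∣ w) : Gfun w = 0 := by
  have hw : w = 12 ∨ w = 16 ∨ w = 20 ∨ w = 24 ∨ w = 28 := by omega
  rcases hw with h | h | h | h | h <;> subst h <;> rw [Gfun] <;> norm_num
  · rw [show Nat.choose 12 2 = 66 by decide,
      show Nat.choose 12 3 = 220 by decide, show Nat.choose 12 4 = 495 by decide,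
      show Nat.choose 12 6 = 924 by decide, show Nat.choose 12 8 = 495 by decide]
    norm_num
  · rw [show Nat.choose 16 2 = 120 by decide,
      show Nat.choose 16 3 = 560 by decide, show Nat.choose 16 4 = 1820 by decide,
      show Nat.choose 16 6 = 8008 by decide, show Nat.choose 16 8 = 12870 by decide]
    norm_num
  · rw [show Nat.choose 20 2 = 190 by decide,
      show Nat.choose 20 3 = 1140 by decide, show Nat.choose 20 4 = 4845 by decide,
      show Nat.choose 20 6 = 38760 by decide, show Nat.choose 20 8 = 125970 by decide]
    norm_num
  · rw [show Nat.choose 24 2 = 276 by decide,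
      show Nat.choose 24 3 = 2024 by decide, show Nat.choose 24 4 = 10626 by decide,
      show Nat.choose 24 6 = 134596 by decide, show Nat.choose 24 8 = 735471 by decide]
    norm_num
  · rw [show Nat.choose 28 2 = 378 by decide,
      show Nat.choose 28 3 = 3276 by decide, show Nat.choose 28 4 = 20475 by decide,
      show Nat.choose 28 6 = 376740 by decide, show Nat.choose 28 8 = 3108105 by decide]
    norm_num

lemma Gfun_zero : Gfun 0 = 16782151680 := by rw [Gfun]; norm_num

lemma Gfun_forty : Gfun 40 = -16417935360 := by
  rw [Gfun]
  rw [show Nat.choose 40 1 = 40 by decide, show Nat.choose 40 2 = 780 by decide,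
    show Nat.choose 40 3 = 9880 by decide, show Nat.choose 40 4 = 91390 by decide,
    show Nat.choose 40 6 = 3838380 by decide, show Nat.choose 40 8 = 76904685 by decide]
  norm_num

/-- A doubly even self-dual code of length 40 cannot have all nonzero weights at least 12. -/
lemma no_large_min {C : Submodule (ZMod 2) (Fin 40 → ZMod 2)}
    (hSD : isSelfDual C) (hDE : isDoublyEven C)
    (hmin : ∀ x ∈ C, x ≠ 0 → 12 ≤ wt x) : False := by
  classical
  set M : ℚ := ((Cset C).card : ℚ) with hM
  have hmQ : ∀ t : ℕ, t ≤ 11 →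
      (∑ x ∈ Cset C, ((wt x).choose t : ℚ)) * 2 ^ t = (Nat.choose 40 t : ℚ) * M := by
    intro t ht
    have h := moment hSD hmin t ht
    have := congrArg (fun n : ℕ => (n : ℚ)) h
    push_cast at this
    rw [mul_comm] at this
    rw [this, hM]
  have e1 := hmQ 1 (by norm_num)
  have e2 := hmQ 2 (by norm_num)
  have e3 := hmQ 3 (by norm_num)
  have e4 := hmQ 4 (by norm_num)
  have e6 := hmQ 6 (by norm_num)
  have e8 := hmQ 8 (by norm_num)
  rw [show Nat.choose 40 1 = 40 by decide] at e1
  rw [show Nat.choose 40 2 = 780 by decide] at e2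
  rw [show Nat.choose 40 3 = 9880 by decide] at e3
  rw [show Nat.choose 40 4 = 91390 by decide] at e4
  rw [show Nat.choose 40 6 = 3838380 by decide] at e6
  rw [show Nat.choose 40 8 = 76904685 by decide] at e8
  have hsum0 : ∑ x ∈ Cset C, Gfun (wt x) = 0 := by
    simp only [Gfun]
    simp only [Finset.sum_add_distrib, Finset.sum_sub_distrib, ← Finset.mul_sum,
      Finset.sum_const, nsmul_eq_mul]
    push_cast at e1 e2 e3 e4 e6 e8 ⊢
    linear_combination (-4018831209/2 : ℚ) * e1 + (778329186/4 : ℚ) * e2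
      + (-111318291/8 : ℚ) * e3 + (9353124/16 : ℚ) * e4
      + (-71352/64 : ℚ) * e6 + (512/256 : ℚ) * e8
  have hones : onesV ∈ C := ones_mem hSD hDE
  have h0ne : (0 : Fin 40 → ZMod 2) ≠ onesV := by
    intro h
    have := congrFun h 0
    simp [onesV] at this
  have hsub : ({0, onesV} : Finset (Fin 40 → ZMod 2)) ⊆ Cset C := by
    intro x hx
    rw [Finset.mem_insert, Finset.mem_singleton] at hx
    rcases hx with h | h <;> subst h
    · exact mem_Cset.2 (zero_mem C)
    · exact mem_Cset.2 hones
  have hvanish : ∀ x ∈ Cset C, x ∉ ({0, onesV} : Finset (Fin 40 → ZMod 2)) →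
      Gfun (wt x) = 0 := by
    intro x hx hnx
    rw [Finset.mem_insert, Finset.mem_singleton] at hnx
    push_neg at hnx
    obtain ⟨hx0, hx1⟩ := hnx
    have hxC := mem_Cset.1 hx
    have h12 := hmin x hxC hx0
    have h4 := hDE x hxC
    have h28 : wt x ≤ 28 := by
      have hxo : x + onesV ∈ C := add_mem hxC hones
      have hne : x + onesV ≠ 0 := by
        intro h
        apply hx1
        funext i
        have h2 := congrFun h i
        simp only [Pi.add_apply, onesV, Pi.zero_apply] at h2 ⊢
        have h3 : ∀ a : ZMod 2, a + 1 = 0 → a = 1 := by decide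
        exact h3 _ h2
      have h12' := hmin _ hxo hne
      rw [wt_compl] at h12'
      have := wt_le_forty x
      omega
    exact Gfun_vanish h12 h28 h4
  have hsum2 : ∑ x ∈ Cset C, Gfun (wt x) = 364216320 := by
    rw [← Finset.sum_subset hsub hvanish]
    rw [Finset.sum_pair h0ne]
    rw [show wt (0 : Fin 40 → ZMod 2) = 0 from wt_eq_zero_iff.2 rfl]
    rw [show wt onesV = 40 by
      rw [show (onesV : Fin 40 → ZMod 2) = 0 + onesV by simp, wt_compl,
        show wt (0 : Fin 40 → ZMod 2) = 0 from wt_eq_zero_iff.2 rfl]]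
    rw [Gfun_zero, Gfun_forty]
    norm_num
  rw [hsum0] at hsum2
  norm_num at hsum2

/-- Every binary doubly even self-dual code of length 40 contains a nonzero codeword of
weight at most 8, and has minimum weight exactly 4 or exactly 8. -/
theorem min_weight_doubly_even_self_dual_length_40
    (C : Submodule (ZMod 2) (Fin 40 → ZMod 2))
    (hSD : isSelfDual C) (hDE : isDoublyEven C) :
    (∃ x ∈ C, x ≠ 0 ∧ wt x ≤ 8) ∧ (minWt C = 4 ∨ minWt C = 8) := by
  have key : ∃ x ∈ C, x ≠ 0 ∧ wt x ≤ 8 := by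
    by_contra hcon
    push_neg at hcon
    refine no_large_min hSD hDE fun x hx h0 => ?_
    have h8 := hcon x hx h0
    have h4 := hDE x hx
    omega
  refine ⟨key, ?_⟩
  obtain ⟨x0, hx0C, hx0ne, hx0le⟩ := key
  have hmem : wt x0 ∈ {w | ∃ x ∈ C, x ≠ 0 ∧ wt x = w} := ⟨x0, hx0C, hx0ne, rfl⟩
  have hinf_mem := Nat.sInf_mem (Set.nonempty_of_mem hmem)
  obtain ⟨y, hyC, hyne, hywt⟩ := hinf_mem
  have hle : sInf {w | ∃ x ∈ C, x ≠ 0 ∧ wt x = w} ≤ 8 :=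
    le_trans (Nat.sInf_le hmem) hx0le
  have hdvd : 4 ∣ sInf {w | ∃ x ∈ C, x ≠ 0 ∧ wt x = w} := hywt ▸ hDE y hyC
  have hpos : sInf {w | ∃ x ∈ C, x ≠ 0 ∧ wt x = w} ≠ 0 := by
    intro h
    rw [h] at hywt
    exact hyne (wt_eq_zero_iff.1 hywt)
  rw [minWt]
  omega
end

section
/- For i = 1, 2, let C_i be a binary doubly even code of length n_i containing the all-one vector, let f : C₁^⊥/C₁ → C₂^⊥/C₂ be an isometry, and for i = 1, 2 let σ_i be the linear automorphism of C_i^⊥/C_i induced by an automorphism (coordinate permutation preserving the code) of C_i. Then the codes D(C₁, C₂, f) and D(C₁, C₂, σ₂ ∘ f ∘ σ₁) are equivalent. -/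
open Finset

/-- The quotient `C^⊥ / C` (with `C` viewed inside its dual code). -/
abbrev resQuot {n : ℕ} (C : Submodule (ZMod 2) (Fin n → ZMod 2)) :=
  ↥(dualCode C) ⧸ Submodule.comap (dualCode C).subtype C

/-- A bijective linear map `f : C₁^⊥/C₁ → C₂^⊥/C₂` is an isometry if
`q_{C₁} = q_{C₂} ∘ f`, i.e. whenever `y ∈ C₂^⊥` represents the image under `f` of the
class of `x ∈ C₁^⊥`, we have `wt x / 2 ≡ wt y / 2 (mod 2)`. -/
def IsIsometry {n₁ n₂ : ℕ} {C₁ : Submodule (ZMod 2) (Fin n₁ → ZMod 2)}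
    {C₂ : Submodule (ZMod 2) (Fin n₂ → ZMod 2)}
    (f : resQuot C₁ ≃ₗ[ZMod 2] resQuot C₂) : Prop :=
  ∀ (x : ↥(dualCode C₁)) (y : ↥(dualCode C₂)),
    f (Submodule.Quotient.mk x) = Submodule.Quotient.mk y →
      wt x.1 / 2 ≡ wt y.1 / 2 [MOD 2]

/-- The set `D(C₁, C₂, f) = {(x₁, x₂) | x₁ ∈ C₁^⊥, x₂ ∈ f(x₁ + C₁)}`. -/
def DSet {n₁ n₂ : ℕ} (C₁ : Submodule (ZMod 2) (Fin n₁ → ZMod 2))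
    (C₂ : Submodule (ZMod 2) (Fin n₂ → ZMod 2))
    (f : resQuot C₁ ≃ₗ[ZMod 2] resQuot C₂) : Set (Fin (n₁ + n₂) → ZMod 2) :=
  {z | ∃ (x : ↥(dualCode C₁)) (y : ↥(dualCode C₂)),
    f (Submodule.Quotient.mk x) = Submodule.Quotient.mk y ∧ z = Fin.append x.1 y.1}

/-- Equivalence of sets of vectors: one is obtained from the other by permuting
coordinates. -/
def setCodeEquiv {n : ℕ} (s t : Set (Fin n → ZMod 2)) : Prop :=
  ∃ σ : Equiv.Perm (Fin n), (permMap σ) '' s = t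

lemma permMap_permMap {n : ℕ} (σ ρ : Equiv.Perm (Fin n)) (v : Fin n → ZMod 2) :
    permMap σ (permMap ρ v) = permMap (σ.trans ρ) v := rfl

lemma map_permMap_inv {n : ℕ} {C : Submodule (ZMod 2) (Fin n → ZMod 2)}
    (τ : Equiv.Perm (Fin n)) (hτ : Submodule.map (permMap τ) C = C) :
    Submodule.map (permMap τ⁻¹) C = C := by
  conv_lhs => rw [← hτ]
  rw [← Submodule.map_comp]
  have : (permMap τ⁻¹).comp (permMap τ) = LinearMap.id :=
    LinearMap.ext fun v => funext fun i => by simp [permMap, LinearMap.funLeft]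
  rw [this, Submodule.map_id]

lemma permMap_mem_dualCode {n : ℕ} {C : Submodule (ZMod 2) (Fin n → ZMod 2)}
    (τ : Equiv.Perm (Fin n)) (hτ : Submodule.map (permMap τ) C = C)
    {x : Fin n → ZMod 2} (hx : x ∈ dualCode C) : permMap τ x ∈ dualCode C := by
  intro y hy
  have hy' : permMap τ⁻¹ y ∈ C := by
    rw [← hτ] at hy
    obtain ⟨w, hw, rfl⟩ := hy
    have : permMap τ⁻¹ (permMap τ w) = w := by
      ext i; simp [permMap, LinearMap.funLeft]
    rwa [this]
  have h := hx _ hy'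
  rw [← h]
  exact Fintype.sum_equiv τ _ _ (fun i => by simp [permMap, LinearMap.funLeft])

/-- If `f : C₁^⊥/C₁ → C₂^⊥/C₂` is an isometry and `σ₁, σ₂` are the linear automorphisms
of `C₁^⊥/C₁`, `C₂^⊥/C₂` induced by coordinate-permutation automorphisms `τ₁, τ₂` of
`C₁, C₂`, then `D(C₁, C₂, f)` and `D(C₁, C₂, σ₂ ∘ f ∘ σ₁)` are equivalent. -/
theorem DSet_equiv_of_automorphisms {n₁ n₂ : ℕ}
    (C₁ : Submodule (ZMod 2) (Fin n₁ → ZMod 2))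
    (C₂ : Submodule (ZMod 2) (Fin n₂ → ZMod 2))
    (hDE₁ : isDoublyEven C₁) (hDE₂ : isDoublyEven C₂)
    (hone₁ : (fun _ => 1 : Fin n₁ → ZMod 2) ∈ C₁)
    (hone₂ : (fun _ => 1 : Fin n₂ → ZMod 2) ∈ C₂)
    (f : resQuot C₁ ≃ₗ[ZMod 2] resQuot C₂) (hf : IsIsometry f)
    (τ₁ : Equiv.Perm (Fin n₁)) (hτ₁ : Submodule.map (permMap τ₁) C₁ = C₁)
    (τ₂ : Equiv.Perm (Fin n₂)) (hτ₂ : Submodule.map (permMap τ₂) C₂ = C₂)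
    (σ₁ : resQuot C₁ ≃ₗ[ZMod 2] resQuot C₁)
    (hσ₁ : ∀ (u v : ↥(dualCode C₁)), permMap τ₁ u.1 = v.1 →
      σ₁ (Submodule.Quotient.mk u) = Submodule.Quotient.mk v)
    (σ₂ : resQuot C₂ ≃ₗ[ZMod 2] resQuot C₂)
    (hσ₂ : ∀ (u v : ↥(dualCode C₂)), permMap τ₂ u.1 = v.1 →
      σ₂ (Submodule.Quotient.mk u) = Submodule.Quotient.mk v) :
    setCodeEquiv (DSet C₁ C₂ f) (DSet C₁ C₂ (σ₁ ≪≫ₗ f ≪≫ₗ σ₂)) := by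
  have hτ₁' := map_permMap_inv τ₁ hτ₁
  have hτ₂' := map_permMap_inv τ₂ hτ₂
  refine ⟨finSumFinEquiv.permCongr (Equiv.sumCongr τ₁⁻¹ τ₂), ?_⟩
  have hact : ∀ (x : Fin n₁ → ZMod 2) (y : Fin n₂ → ZMod 2),
      permMap (finSumFinEquiv.permCongr (Equiv.sumCongr τ₁⁻¹ τ₂)) (Fin.append x y)
        = Fin.append (permMap τ₁⁻¹ x) (permMap τ₂ y) := by
    intro x y
    ext i
    refine Fin.addCases (fun k => ?_) (fun k => ?_) i
    · simp [permMap, LinearMap.funLeft, Equiv.permCongr_apply, Fin.append_left]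
    · simp [permMap, LinearMap.funLeft, Equiv.permCongr_apply, Fin.append_right]
  ext z
  simp only [Set.mem_image, DSet, Set.mem_setOf_eq]
  constructor
  · rintro ⟨w, ⟨x, y, hxy, rfl⟩, rfl⟩
    refine ⟨⟨permMap τ₁⁻¹ x.1, permMap_mem_dualCode _ hτ₁' x.2⟩,
      ⟨permMap τ₂ y.1, permMap_mem_dualCode _ hτ₂ y.2⟩, ?_, hact x.1 y.1⟩
    have h1 : σ₁ (Submodule.Quotient.mk
        (⟨permMap τ₁⁻¹ x.1, permMap_mem_dualCode _ hτ₁' x.2⟩ : ↥(dualCode C₁)))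
        = Submodule.Quotient.mk x :=
      hσ₁ _ _ (by ext i; simp [permMap, LinearMap.funLeft])
    have h2 : σ₂ (Submodule.Quotient.mk y) = Submodule.Quotient.mk
        (⟨permMap τ₂ y.1, permMap_mem_dualCode _ hτ₂ y.2⟩ : ↥(dualCode C₂)) :=
      hσ₂ _ _ rfl
    simp [LinearEquiv.trans_apply, h1, hxy, h2]
  · rintro ⟨x', y', hxy, rfl⟩
    refine ⟨Fin.append (permMap τ₁ x'.1) (permMap τ₂⁻¹ y'.1),
      ⟨⟨permMap τ₁ x'.1, permMap_mem_dualCode _ hτ₁ x'.2⟩,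
       ⟨permMap τ₂⁻¹ y'.1, permMap_mem_dualCode _ hτ₂' y'.2⟩, ?_, rfl⟩, ?_⟩
    · have h1 : σ₁ (Submodule.Quotient.mk x') = Submodule.Quotient.mk
          (⟨permMap τ₁ x'.1, permMap_mem_dualCode _ hτ₁ x'.2⟩ : ↥(dualCode C₁)) :=
        hσ₁ _ _ rfl
      have h2 : σ₂ (Submodule.Quotient.mk
          (⟨permMap τ₂⁻¹ y'.1, permMap_mem_dualCode _ hτ₂' y'.2⟩ : ↥(dualCode C₂)))
          = Submodule.Quotient.mk y' :=
        hσ₂ _ _ (by ext i; simp [permMap, LinearMap.funLeft])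
      have h := hxy
      simp only [LinearEquiv.trans_apply, h1] at h
      rw [← h2] at h
      exact σ₂.injective h
    · rw [hact]
      have e1 : permMap τ₁⁻¹ (permMap τ₁ x'.1) = x'.1 := by
        ext i; simp [permMap, LinearMap.funLeft]
      have e2 : permMap τ₂ (permMap τ₂⁻¹ y'.1) = y'.1 := by
        ext i; simp [permMap, LinearMap.funLeft]
      rw [e1, e2]
end
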